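/- arXiv:1203.3742 — 9 statements merged into one kernel-verified Lean document; each statement's English description precedes it below -/
import Mathlib

section
/- Let X ⊆ ℝⁿ be a nonempty convex set with nonempty interior, φ : ℝⁿ → ℝ concave on X, A : ℝⁿ → ℝᵐ linear, b ∈ ℝᵐ, and F : ℝⁿ → ℝ with F(x) ≥ 0 for all x in the interior of X. Fix ν > 0, t > 0 and y ∈ ℝᵐ. Suppose x̄ lies in the interior of X, A x̄ = b, and the barrier segment bound holds: for every x ∈ X and every τ ∈ [0,1), F(x̄ + τ(x − x̄)) ≤ F(x̄) − ν·ln(1 − τ). Assume the supremum defining g(y) is attained at some point x*(y) ∈ X and that g(y;t) is finite. Then g(y) − φ(x̄) ≥ 0, g(y;t) − φ(x̄) + t·F(x̄) ≥ 0, and g(y;t) ≤ g(y) ≤ g(y;t) + t·(ν + F(x̄)) + 2·√(tν)·√(g(y;t) + t·F(x̄) − φ(x̄)). -/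
open scoped RealInnerProductSpace

lemma key_ineq (Δ S a : ℝ) (hΔ : 0 ≤ Δ) (hS : 0 ≤ S) (ha : 0 < a)
    (h : ∀ τ ∈ Set.Ico (0:ℝ) 1, τ * Δ ≤ S + a * (τ / (1 - τ))) :
    Δ ≤ S + a + 2 * Real.sqrt a * Real.sqrt S := by
  have hsS : 0 ≤ Real.sqrt S := Real.sqrt_nonneg S
  have hsa : 0 ≤ Real.sqrt a := Real.sqrt_nonneg a
  by_cases hcase : Δ ≤ a
  · nlinarith [Real.sq_sqrt hS, Real.sq_sqrt ha.le]
  · push_neg at hcase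
    have hΔpos : 0 < Δ := lt_trans ha hcase
    have hu2 : Real.sqrt Δ ^ 2 = Δ := Real.sq_sqrt hΔ
    have hv2 : Real.sqrt a ^ 2 = a := Real.sq_sqrt ha.le
    have hupos : 0 < Real.sqrt Δ := Real.sqrt_pos.mpr hΔpos
    have hvpos : 0 < Real.sqrt a := Real.sqrt_pos.mpr ha
    have hvu : Real.sqrt a < Real.sqrt Δ := Real.sqrt_lt_sqrt ha.le hcase
    obtain ⟨u, hu⟩ : ∃ u, u = Real.sqrt Δ := ⟨_, rfl⟩
    obtain ⟨v, hv⟩ : ∃ v, v = Real.sqrt a := ⟨_, rfl⟩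
    rw [← hu] at hu2 hupos hvu
    rw [← hv] at hv2 hvpos hvu hsa
    have hτmem : (1 - v / u) ∈ Set.Ico (0:ℝ) 1 := by
      constructor
      · have h1 : v / u ≤ 1 := by rw [div_le_one hupos]; exact hvu.le
        linarith
      · have h2 : 0 < v / u := div_pos hvpos hupos
        linarith
    have hkey := h (1 - v / u) hτmem
    have h1τ : 1 - (1 - v / u) = v / u := by ring
    rw [h1τ] at hkey
    have hdiv : (1 - v / u) / (v / u) = (u - v) / v := by
      field_simp
    rw [hdiv] at hkey
    have hsq : (u - v) ^ 2 ≤ S := by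
      have h2 : (1 - v / u) * u ^ 2 ≤ S + v ^ 2 * ((u - v) / v) := by
        rw [hu2, hv2]; exact hkey
      have h3 : (1 - v / u) * u ^ 2 = (u - v) * u := by
        field_simp
      have h4 : v ^ 2 * ((u - v) / v) = v * (u - v) := by
        field_simp
      rw [h3, h4] at h2
      nlinarith
    have huv : u - v ≤ Real.sqrt S := by
      have h5 := Real.sqrt_le_sqrt hsq
      rwa [Real.sqrt_sq (by linarith)] at h5
    rw [← hv]
    nlinarith [Real.sq_sqrt hS]

/-- Smoothing via barrier functions: estimate of the dual function
`g(y)` by the smoothed dual function `g(y;t)` (Lemma `le:barrier_smooth`). -/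
theorem stmt0 {n m : ℕ} (X : Set (EuclideanSpace ℝ (Fin n)))
    (hXne : X.Nonempty) (hXconv : Convex ℝ X) (hXint : (interior X).Nonempty)
    (φ : EuclideanSpace ℝ (Fin n) → ℝ) (hφ : ConcaveOn ℝ X φ)
    (A : EuclideanSpace ℝ (Fin n) →ₗ[ℝ] EuclideanSpace ℝ (Fin m))
    (b : EuclideanSpace ℝ (Fin m))
    (F : EuclideanSpace ℝ (Fin n) → ℝ) (hF : ∀ x ∈ interior X, 0 ≤ F x)
    (ν t : ℝ) (hν : 0 < ν) (ht : 0 < t) (y : EuclideanSpace ℝ (Fin m))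
    (xbar : EuclideanSpace ℝ (Fin n)) (hxbar : xbar ∈ interior X)
    (hAxbar : A xbar = b)
    (hbarrier : ∀ x ∈ X, ∀ τ ∈ Set.Ico (0:ℝ) 1,
      F (xbar + τ • (x - xbar)) ≤ F xbar - ν * Real.log (1 - τ))
    (gy gyt : ℝ)
    (hgy : IsGreatest {z : ℝ | ∃ x ∈ X, z = φ x + ⟪y, A x - b⟫} gy)
    (hgyt : IsLUB {z : ℝ | ∃ x ∈ interior X, z = φ x + ⟪y, A x - b⟫ - t * F x} gyt) :
    0 ≤ gy - φ xbar ∧ 0 ≤ gyt - φ xbar + t * F xbar ∧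
    gyt ≤ gy ∧
    gy ≤ gyt + t * (ν + F xbar) +
      2 * Real.sqrt (t * ν) * Real.sqrt (gyt + t * F xbar - φ xbar) := by
  have hxbarX : xbar ∈ X := interior_subset hxbar
  have hzero : ⟪y, A xbar - b⟫ = 0 := by rw [hAxbar, sub_self, inner_zero_right]
  -- part 1
  have h1 : φ xbar ≤ gy := by
    have : φ xbar + ⟪y, A xbar - b⟫ ∈ {z : ℝ | ∃ x ∈ X, z = φ x + ⟪y, A x - b⟫} :=
      ⟨xbar, hxbarX, rfl⟩
    have := hgy.2 this
    rwa [hzero, add_zero] at this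
  -- part 2
  have h2 : φ xbar - t * F xbar ≤ gyt := by
    have hmem : φ xbar + ⟪y, A xbar - b⟫ - t * F xbar ∈
        {z : ℝ | ∃ x ∈ interior X, z = φ x + ⟪y, A x - b⟫ - t * F x} :=
      ⟨xbar, hxbar, rfl⟩
    have := hgyt.1 hmem
    rwa [hzero, add_zero] at this
  -- part 3
  have h3 : gyt ≤ gy := by
    apply hgyt.2
    rintro z ⟨x, hx, rfl⟩
    have hxX : x ∈ X := interior_subset hx
    have : φ x + ⟪y, A x - b⟫ ≤ gy := hgy.2 ⟨x, hxX, rfl⟩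
    have hFx := hF x hx
    nlinarith
  refine ⟨by linarith, by linarith, h3, ?_⟩
  -- part 4
  obtain ⟨⟨xs, hxs, hxseq⟩, _⟩ := hgy
  set Δ := gy - φ xbar with hΔdef
  set S := gyt + t * F xbar - φ xbar with hSdef
  have hΔ : 0 ≤ Δ := by linarith
  have hS : 0 ≤ S := by simp only [hSdef]; linarith
  have hkey : ∀ τ ∈ Set.Ico (0:ℝ) 1, τ * Δ ≤ S + (t * ν) * (τ / (1 - τ)) := by
    intro τ hτ
    obtain ⟨hτ0, hτ1⟩ := hτ
    set xτ := xbar + τ • (xs - xbar) with hxτ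
    have hxτmem : xτ ∈ interior X := by
      rcases eq_or_lt_of_le hτ0 with h0 | h0
      · simp [hxτ, ← h0, hxbar]
      · have heq : xτ = xs + (1 - τ) • (xbar - xs) := by
          simp only [hxτ]; module
        rw [heq]
        exact hXconv.add_smul_sub_mem_interior hxs hxbar ⟨by linarith, by linarith⟩
    -- concavity
    have hconc : (1 - τ) * φ xbar + τ * φ xs ≤ φ xτ := by
      have := hφ.2 hxbarX hxs (by linarith : (0:ℝ) ≤ 1 - τ) hτ0 (by ring)
      have heq : (1 - τ) • xbar + τ • xs = xτ := by
        simp only [hxτ]; module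
      rw [heq] at this
      simpa using this
    -- inner product
    have hinner : ⟪y, A xτ - b⟫ = τ * ⟪y, A xs - b⟫ := by
      have : A xτ - b = τ • (A xs - b) := by
        simp only [hxτ, map_add, map_smul, map_sub, hAxbar]
        module
      rw [this, real_inner_smul_right]
    -- barrier
    have hbar := hbarrier xs hxs τ ⟨hτ0, hτ1⟩
    -- membership in smoothed set
    have hmem : φ xτ + ⟪y, A xτ - b⟫ - t * F xτ ≤ gyt :=
      hgyt.1 ⟨xτ, hxτmem, rfl⟩
    -- log bound : -log(1-τ) ≤ τ/(1-τ)
    have h1τpos : 0 < 1 - τ := by linarith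
    have hlog : -Real.log (1 - τ) ≤ τ / (1 - τ) := by
      have := Real.log_le_sub_one_of_pos (show (0:ℝ) < (1 - τ)⁻¹ by positivity)
      rw [Real.log_inv] at this
      have heq : (1 - τ)⁻¹ - 1 = τ / (1 - τ) := by field_simp; ring
      linarith [heq ▸ this]
    have hgyxs : gy = φ xs + ⟪y, A xs - b⟫ := hxseq
    -- combine
    have hchain : (1 - τ) * φ xbar + τ * gy - t * F xbar
        + t * ν * Real.log (1 - τ) ≤ gyt := by
      have hFτ : t * F xτ ≤ t * (F xbar - ν * Real.log (1 - τ)) :=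
        mul_le_mul_of_nonneg_left hbar ht.le
      rw [hgyxs]
      nlinarith [hinner ▸ hmem]
    have : t * ν * (-Real.log (1 - τ)) ≤ t * ν * (τ / (1 - τ)) :=
      mul_le_mul_of_nonneg_left hlog (by positivity)
    simp only [hΔdef, hSdef]
    nlinarith
  have hmain := key_ineq Δ S (t * ν) hΔ hS (by positivity) hkey
  have hexp : gy = Δ + φ xbar := by simp [hΔdef]
  rw [hexp]
  simp only [hSdef] at hmain ⊢
  nlinarith
end

section
/- Let p < q be real numbers and c > 0. Set S := sup_{τ ∈ [0,1)} { (1 − τ)·p + τ·q + c·ln(1 − τ) }. Then q ≤ S + c + c·max(0, ln((q − p)/c)). -/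
/-- if `S := sup_{τ ∈ [0,1)} { (1-τ)p + τq + c ln(1-τ) }` then
`q ≤ S + c + c·[ln((q-p)/c)]₊`. -/
theorem stmt2 (p q c : ℝ) (hpq : p < q) (hc : 0 < c) :
    q ≤ sSup {z : ℝ | ∃ τ ∈ Set.Ico (0:ℝ) 1,
          z = (1 - τ) * p + τ * q + c * Real.log (1 - τ)} +
        c + c * max 0 (Real.log ((q - p) / c)) := by
  set S := sSup {z : ℝ | ∃ τ ∈ Set.Ico (0:ℝ) 1,
          z = (1 - τ) * p + τ * q + c * Real.log (1 - τ)} with hS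
  have hbdd : BddAbove {z : ℝ | ∃ τ ∈ Set.Ico (0:ℝ) 1,
      z = (1 - τ) * p + τ * q + c * Real.log (1 - τ)} := by
    refine ⟨max p q, ?_⟩
    rintro z ⟨τ, ⟨hτ0, hτ1⟩, rfl⟩
    have h1 : Real.log (1 - τ) ≤ 0 := Real.log_nonpos (by linarith) (by linarith)
    have h2 : (1 - τ) * p + τ * q ≤ max p q := by
      have := le_max_left p q
      have := le_max_right p q
      nlinarith
    nlinarith
  have key : ∀ τ ∈ Set.Ico (0:ℝ) 1, (1-τ)*p + τ*q + c*Real.log (1-τ) ≤ S :=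
    fun τ hτ => le_csSup hbdd ⟨τ, hτ, rfl⟩
  rcases le_or_gt (q - p) c with h | h
  · have h0 := key 0 ⟨le_refl 0, by norm_num⟩
    simp at h0
    have hmax : 0 ≤ c * max 0 (Real.log ((q-p)/c)) := by positivity
    linarith
  · have hd : 0 < q - p := by linarith
    have hτ : (1 - c/(q-p)) ∈ Set.Ico (0:ℝ) 1 := by
      constructor
      · have : c/(q-p) ≤ 1 := (div_le_one hd).mpr (le_of_lt h)
        linarith
      · have : 0 < c/(q-p) := div_pos hc hd
        linarith
    have hk := key _ hτ
    have h1 : (1 : ℝ) - (1 - c/(q-p)) = c/(q-p) := by ring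
    rw [h1] at hk
    have hlog : Real.log (c/(q-p)) = - Real.log ((q-p)/c) := by
      rw [← Real.log_inv, inv_div]
    have hmax : max 0 (Real.log ((q-p)/c)) = Real.log ((q-p)/c) := by
      apply max_eq_right
      apply Real.log_nonneg
      rw [le_div_iff₀ hc]; linarith
    have heq : (c/(q-p))*p + (1 - c/(q-p))*q = q - c := by
      field_simp; ring
    rw [heq, hlog] at hk
    rw [hmax]
    linarith
end

section
/- Let g : ℝᵐ → ℝ be differentiable and let t > 0, c > 0. Suppose that for all y, ŷ ∈ ℝᵐ, ⟨∇g(y) − ∇g(ŷ), y − ŷ⟩ ≥ t·‖∇g(y) − ∇g(ŷ)‖² / ( c·( c + ‖∇g(y) − ∇g(ŷ)‖ ) ). Then for all y, ŷ ∈ ℝᵐ with c·‖ŷ − y‖ < t, g(ŷ) ≤ g(y) + ⟨∇g(y), ŷ − y⟩ + t·ω*( c·‖ŷ − y‖ / t ). -/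
open scoped RealInnerProductSpace

/-- `ω*(u) := −u − ln(1 − u)` for `u ∈ [0,1)`. -/
noncomputable def omegaStar (u : ℝ) : ℝ := -u - Real.log (1 - u)

/-- from the strong-monotonicity-type bound on the gradient of `g`
one gets the descent-type upper bound `g(ŷ) ≤ g(y) + ⟨∇g(y), ŷ−y⟩ + t·ω*(c‖ŷ−y‖/t)`
whenever `c‖ŷ−y‖ < t`. -/
theorem stmt4 {m : ℕ} (g : EuclideanSpace ℝ (Fin m) → ℝ) (hg : Differentiable ℝ g)
    (t c : ℝ) (ht : 0 < t) (hc : 0 < c)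
    (hmono : ∀ y yhat : EuclideanSpace ℝ (Fin m),
      t * ‖gradient g y - gradient g yhat‖ ^ 2 /
          (c * (c + ‖gradient g y - gradient g yhat‖)) ≤
        ⟪gradient g y - gradient g yhat, y - yhat⟫) :
    ∀ y yhat : EuclideanSpace ℝ (Fin m), c * ‖yhat - y‖ < t →
      g yhat ≤ g y + ⟪gradient g y, yhat - y⟫ + t * omegaStar (c * ‖yhat - y‖ / t) := by
  intro y yhat hlt
  set d : EuclideanSpace ℝ (Fin m) := yhat - y with hd
  set r : ℝ := c * ‖d‖ with hrdef
  have hr0 : 0 ≤ r := mul_nonneg hc.le (norm_nonneg _)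
  have hrt : r < t := hlt
  set p : ℝ → EuclideanSpace ℝ (Fin m) := fun s => y + s • d with hp
  have hline : ∀ s : ℝ, HasDerivAt p d s := by
    intro s
    simpa [hp] using ((hasDerivAt_id s).smul_const d).const_add y
  have hderivg : ∀ s : ℝ, HasDerivAt (fun s => g (p s)) ⟪gradient g (p s), d⟫ s := by
    intro s
    have h1 := ((hg (p s)).hasGradientAt.hasFDerivAt).comp_hasDerivAt s (hline s)
    simp at h1 ⊢
    exact h1
  set F : ℝ → ℝ :=
    fun s => g y + s * ⟪gradient g y, d⟫ + t * omegaStar (s * r / t) - g (p s) with hF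
  -- positivity of denominators on [0,1]
  have hden : ∀ s ∈ Set.Icc (0:ℝ) 1, 0 < t - s * r := by
    intro s hs
    have h1 : s * r ≤ r := by nlinarith [hs.1, hs.2]
    linarith
  have hden' : ∀ s ∈ Set.Icc (0:ℝ) 1, 0 < 1 - s * r / t := by
    intro s hs
    have := hden s hs
    have : 0 < (t - s * r) / t := div_pos this ht
    have h2 : (t - s * r) / t = 1 - s * r / t := by field_simp
    linarith [h2 ▸ this]
  -- derivative of F on [0,1]
  have key : ∀ s ∈ Set.Icc (0:ℝ) 1,
      HasDerivAt F
        (s * r ^ 2 / (t - s * r) - ⟪gradient g (p s) - gradient g y, d⟫) s := by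
    intro s hs
    have hd1 : 0 < t - s * r := hden s hs
    have hd2 : 0 < 1 - s * r / t := hden' s hs
    have h2 : HasDerivAt (fun s : ℝ => s * r / t) (r / t) s := by
      simpa using ((hasDerivAt_id s).mul_const r).div_const t
    have h3 : HasDerivAt (fun s : ℝ => 1 - s * r / t) (-(r / t)) s := h2.const_sub 1
    have h4 : HasDerivAt (fun s : ℝ => Real.log (1 - s * r / t))
        (-(r / t) / (1 - s * r / t)) s := h3.log (ne_of_gt hd2)
    have h5 : HasDerivAt (fun s : ℝ => -(s * r / t) - Real.log (1 - s * r / t))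
        (-(r / t) - -(r / t) / (1 - s * r / t)) s := h2.neg.sub h4
    have h6 : HasDerivAt (fun s : ℝ => t * omegaStar (s * r / t))
        (t * (-(r / t) - -(r / t) / (1 - s * r / t))) s := by
      simpa [omegaStar] using h5.const_mul t
    have h7 : HasDerivAt (fun s : ℝ => g y + s * ⟪gradient g y, d⟫)
        ⟪gradient g y, d⟫ s := by
      simpa using ((hasDerivAt_id s).mul_const (⟪gradient g y, d⟫ : ℝ)).const_add (g y)
    have h8 := (h7.add h6).sub (hderivg s)
    refine h8.congr_deriv ?_
    rw [inner_sub_left]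
    have ht' : t ≠ 0 := ne_of_gt ht
    have hd1' : t - s * r ≠ 0 := ne_of_gt hd1
    have hd2' : (1 : ℝ) - s * r / t ≠ 0 := ne_of_gt hd2
    field_simp
    have hx : -(r * s) + t ≠ 0 := by intro h; apply hd1'; linarith
    linear_combination r * (mul_inv_cancel₀ hx)
  -- key inequality: derivative of F is nonnegative on [0,1]
  have keyineq : ∀ s ∈ Set.Icc (0:ℝ) 1,
      ⟪gradient g (p s) - gradient g y, d⟫ ≤ s * r ^ 2 / (t - s * r) := by
    intro s hs
    have hd1 : 0 < t - s * r := hden s hs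
    set Δ : EuclideanSpace ℝ (Fin m) := gradient g (p s) - gradient g y with hΔ
    set n : ℝ := ‖Δ‖ with hn
    have hn0 : 0 ≤ n := norm_nonneg _
    have hps : p s - y = s • d := by simp [hp]
    have hm := hmono (p s) y
    rw [hps] at hm
    rw [real_inner_smul_right] at hm
    have hCS : ⟪Δ, d⟫ ≤ n * ‖d‖ := real_inner_le_norm Δ d
    have hcpos : 0 < c * (c + n) := mul_pos hc (by linarith)
    have hA : t * n ^ 2 ≤ s * ⟪Δ, d⟫ * (c * (c + n)) := by
      rw [div_le_iff₀ hcpos] at hm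
      exact hm
    have hB : s * ⟪Δ, d⟫ ≤ s * (n * ‖d‖) :=
      mul_le_mul_of_nonneg_left hCS hs.1
    have hA2 : t * n ^ 2 ≤ s * (n * ‖d‖) * (c * (c + n)) := by
      calc t * n ^ 2 ≤ s * ⟪Δ, d⟫ * (c * (c + n)) := hA
        _ ≤ s * (n * ‖d‖) * (c * (c + n)) :=
          mul_le_mul_of_nonneg_right hB hcpos.le
    rw [le_div_iff₀ hd1]
    rcases eq_or_lt_of_le hn0 with h0 | h0
    · have hΔ0 : Δ = 0 := by
        rw [← norm_eq_zero]; exact (h0).symm ▸ rfl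
      rw [hΔ0, inner_zero_left, zero_mul]
      exact mul_nonneg hs.1 (sq_nonneg r)
    · -- from hA2 : n > 0 so n * (t - s*r) ≤ s * r * c
      have h' : t * n ≤ s * (‖d‖ * (c * (c + n))) :=
        le_of_mul_le_mul_right (by linear_combination hA2) h0
      have hn2 : n * (t - s * r) ≤ s * r * c := by
        rw [hrdef]; nlinarith [h']
      have h3 : ⟪Δ, d⟫ * (t - s * r) ≤ n * ‖d‖ * (t - s * r) :=
        mul_le_mul_of_nonneg_right hCS hd1.le
      have h5 : s * r * c * ‖d‖ = s * r ^ 2 := by rw [hrdef]; ring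
      calc ⟪Δ, d⟫ * (t - s * r) ≤ n * ‖d‖ * (t - s * r) := h3
        _ = n * (t - s * r) * ‖d‖ := by ring
        _ ≤ s * r * c * ‖d‖ := mul_le_mul_of_nonneg_right hn2 (norm_nonneg d)
        _ = s * r ^ 2 := h5
  -- monotonicity
  have hmonoF : MonotoneOn F (Set.Icc 0 1) := by
    apply monotoneOn_of_deriv_nonneg (convex_Icc 0 1)
    · intro s hs
      exact ((key s hs).differentiableAt.continuousAt).continuousWithinAt
    · intro s hs
      rw [interior_Icc] at hs
      exact ((key s (Set.mem_Icc_of_Ioo hs)).differentiableAt).differentiableWithinAt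
    · intro s hs
      rw [interior_Icc] at hs
      have hs' := Set.mem_Icc_of_Ioo hs
      rw [(key s hs').deriv]
      have := keyineq s hs'
      linarith
  have h01 : F 0 ≤ F 1 :=
    hmonoF (Set.mem_Icc.2 ⟨le_refl 0, zero_le_one⟩)
      (Set.mem_Icc.2 ⟨zero_le_one, le_refl 1⟩) zero_le_one
  have hF0 : F 0 = 0 := by
    simp [hF, hp, omegaStar]
  have hp1 : p 1 = yhat := by
    simp [hp, hd]
  have hF1 : F 1 = g y + ⟪gradient g y, d⟫ + t * omegaStar (r / t) - g yhat := by
    simp [hF, hp1]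
  rw [hF0, hF1] at h01
  have : r = c * ‖yhat - y‖ := by rw [hrdef, hd]
  rw [this] at h01
  rw [hd] at h01
  linarith
end

section
/- Let H be a real inner product space, let d, h ∈ H and let t > 0, c > 0. If ⟨d, h⟩ ≥ t·‖d‖² / ( c·( c + ‖d‖ ) ) and c·‖h‖ < t, then ‖d‖ ≤ c²·‖h‖ / ( t − c·‖h‖ ). -/
open scoped RealInnerProductSpace

/-- if `⟨d,h⟩ ≥ t‖d‖²/(c(c+‖d‖))` and `c‖h‖ < t` then
`‖d‖ ≤ c²‖h‖/(t − c‖h‖)`. -/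
theorem stmt5 {H : Type*} [NormedAddCommGroup H] [InnerProductSpace ℝ H]
    (d h : H) (t c : ℝ) (ht : 0 < t) (hc : 0 < c)
    (h1 : t * ‖d‖ ^ 2 / (c * (c + ‖d‖)) ≤ ⟪d, h⟫)
    (h2 : c * ‖h‖ < t) :
    ‖d‖ ≤ c ^ 2 * ‖h‖ / (t - c * ‖h‖) := by
  have hpos : 0 < t - c * ‖h‖ := by linarith
  rcases eq_or_lt_of_le (norm_nonneg d) with hd | hd
  · rw [← hd]
    positivity
  have hcs : ⟪d, h⟫ ≤ ‖d‖ * ‖h‖ := real_inner_le_norm d h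
  have hden : 0 < c * (c + ‖d‖) := by positivity
  have key : t * ‖d‖ ^ 2 ≤ ‖d‖ * ‖h‖ * (c * (c + ‖d‖)) := by
    rw [div_le_iff₀ hden] at h1
    nlinarith
  rw [le_div_iff₀ hpos]
  nlinarith [norm_nonneg h]
end

section
/- Let t̲ > 0, c̄ > 0 and G* be real numbers, and let (G_k)_{k≥0} and (λ_k)_{k≥0} be real sequences with λ_k ≥ 0 and G_k ≥ G* for all k. If G_{k+1} ≤ G_k − (t̲/2)·ω( λ_{k+1} / c̄ ) for all k ≥ 0, then λ_k → 0 as k → ∞. -/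
lemma omega_strictMono : StrictMonoOn (fun s : ℝ => s - Real.log (1 + s)) (Set.Ici 0) := by
  apply strictMonoOn_of_deriv_pos (convex_Ici 0)
  · apply ContinuousOn.sub continuousOn_id
    apply ContinuousOn.log (by fun_prop)
    intro x hx
    simp only [Set.mem_Ici] at hx
    linarith
  · intro x hx
    rw [interior_Ici] at hx
    simp only [Set.mem_Ioi] at hx
    have h1 : (0:ℝ) < 1 + x := by linarith
    have hd : HasDerivAt (fun s : ℝ => s - Real.log (1 + s)) (1 - 1/(1+x)) x := by
      have hlog : HasDerivAt (fun s : ℝ => Real.log (1 + s)) (1/(1+x)) x := by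
        have := (HasDerivAt.const_add 1 (hasDerivAt_id x)).log h1.ne'
        simpa using this
      exact (hasDerivAt_id x).sub hlog
    rw [hd.deriv]
    have : 1/(1+x) < 1 := by
      rw [div_lt_one h1]; linarith
    linarith

lemma omega_nonneg (s : ℝ) (hs : 0 ≤ s) : 0 ≤ s - Real.log (1 + s) := by
  have := Real.log_le_sub_one_of_pos (x := 1 + s) (by linarith)
  linarith

/-- if `G_{k+1} ≤ G_k − (t̲/2)·ω(λ_{k+1}/c̄)` with `G_k` bounded
below and `λ_k ≥ 0`, then `λ_k → 0`. -/
theorem stmt8 (tlow cbar gstar : ℝ) (htlow : 0 < tlow) (hcbar : 0 < cbar)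
    (G lam : ℕ → ℝ) (hlam : ∀ k, 0 ≤ lam k) (hG : ∀ k, gstar ≤ G k)
    (hrec : ∀ k, G (k + 1) ≤ G k -
      (tlow / 2) * (lam (k + 1) / cbar - Real.log (1 + lam (k + 1) / cbar))) :
    Filter.Tendsto lam Filter.atTop (nhds 0) := by
  set f : ℝ → ℝ := fun s => s - Real.log (1 + s) with hf
  set s : ℕ → ℝ := fun k => lam k / cbar with hs
  have hs0 : ∀ k, 0 ≤ s k := fun k => div_nonneg (hlam k) hcbar.le
  set a : ℕ → ℝ := fun k => (tlow / 2) * f (s (k + 1)) with ha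
  have ha0 : ∀ k, 0 ≤ a k := fun k =>
    mul_nonneg (by linarith) (omega_nonneg _ (hs0 _))
  -- partial sums bounded
  have hsum : Summable a := by
    apply summable_of_sum_range_le ha0 (c := G 0 - gstar)
    intro n
    have : ∑ i ∈ Finset.range n, a i ≤ G 0 - G n := by
      induction n with
      | zero => simp
      | succ m ih =>
        rw [Finset.sum_range_succ]
        have := hrec m
        have : a m ≤ G m - G (m + 1) := by
          simpa [ha] using by linarith [hrec m]
        linarith
    linarith [hG n]
  have ha_tendsto : Filter.Tendsto a Filter.atTop (nhds 0) := hsum.tendsto_atTop_zero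
  have hfs : Filter.Tendsto (fun k => f (s (k + 1))) Filter.atTop (nhds 0) := by
    have := ha_tendsto.const_mul (2 / tlow)
    simp only [mul_zero] at this
    convert this using 2 with k
    field_simp [ha]
    ring
  -- s (k+1) → 0
  have hstend : Filter.Tendsto (fun k => s (k + 1)) Filter.atTop (nhds 0) := by
    rw [Metric.tendsto_atTop]
    intro ε hε
    have hfε : 0 < f ε := by
      have := omega_strictMono (Set.self_mem_Ici) (Set.mem_Ici.mpr hε.le) hε
      simpa [hf] using this
    rw [Metric.tendsto_atTop] at hfs
    obtain ⟨N, hN⟩ := hfs (f ε) hfε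
    refine ⟨N, fun n hn => ?_⟩
    have h1 := hN n hn
    rw [Real.dist_eq] at h1 ⊢
    rw [abs_sub_lt_iff]
    constructor
    · by_contra h
      push_neg at h
      have hεs : ε ≤ s (n + 1) := by linarith
      have := omega_strictMono.monotoneOn (Set.mem_Ici.mpr hε.le)
        (Set.mem_Ici.mpr (hs0 (n+1))) hεs
      have habs : |f (s (n+1)) - 0| < f ε := h1
      rw [sub_zero, abs_of_nonneg (omega_nonneg _ (hs0 (n+1)))] at habs
      exact absurd this (not_le.mpr habs)
    · have := hs0 (n + 1); linarith
  have hlamtend : Filter.Tendsto (fun k => lam (k + 1)) Filter.atTop (nhds 0) := by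
    have := hstend.const_mul cbar
    simp only [mul_zero] at this
    convert this using 2 with k
    field_simp [hs]
    simp only [hs]; field_simp [hcbar.ne']
  exact (Filter.tendsto_add_atTop_iff_nat 1).mp hlamtend
end

section
/- Let c̄ > 0, r > 0, t > 0 and let (Δ_k)_{k≥0} be a sequence of nonnegative real numbers with Δ₀ ≤ (3/4)·c̄·r and Δ_{k+1} ≤ Δ_k − t·ω( Δ_k / (c̄·r) ) for all k ≥ 0. Then for every k ≥ 0, Δ_k ≤ 12·c̄²·r² / ( 16·c̄·r + 3·t·k ). -/
/-- ω(s) = s - log(1+s) is bounded below by s²/4 on [0, 3/4]. -/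
lemma omega_lower (s : ℝ) (hs : 0 ≤ s) (hs' : s ≤ 3 / 4) :
    s ^ 2 / 4 ≤ s - Real.log (1 + s) := by
  have hx : 0 ≤ s - s ^ 2 / 4 := by
    nlinarith [mul_le_mul_of_nonneg_right hs' hs]
  have hexp : 1 + (s - s ^ 2 / 4) + (s - s ^ 2 / 4) ^ 2 / 2 ≤ Real.exp (s - s ^ 2 / 4) :=
    Real.quadratic_le_exp_of_nonneg hx
  have h1s : 1 + s ≤ 1 + (s - s ^ 2 / 4) + (s - s ^ 2 / 4) ^ 2 / 2 := by
    nlinarith [mul_le_mul_of_nonneg_right hs' (mul_nonneg hs hs), sq_nonneg (s * s)]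
  have hlog : Real.log (1 + s) ≤ s - s ^ 2 / 4 := by
    calc Real.log (1 + s) ≤ Real.log (Real.exp (s - s ^ 2 / 4)) :=
          Real.log_le_log (by linarith) (le_trans h1s hexp)
      _ = s - s ^ 2 / 4 := Real.log_exp _
  linarith

/-- local convergence rate of the path-following gradient method:
from `Δ₀ ≤ (3/4)c̄r` and `Δ_{k+1} ≤ Δ_k − t·ω(Δ_k/(c̄r))` one obtains
`Δ_k ≤ 12c̄²r²/(16c̄r + 3tk)`. -/
theorem stmt10 (cbar r t : ℝ) (hcbar : 0 < cbar) (hr : 0 < r) (ht : 0 < t)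
    (Δ : ℕ → ℝ) (hΔ : ∀ k, 0 ≤ Δ k) (h0 : Δ 0 ≤ (3 / 4) * cbar * r)
    (hrec : ∀ k, Δ (k + 1) ≤ Δ k -
      t * (Δ k / (cbar * r) - Real.log (1 + Δ k / (cbar * r)))) :
    ∀ k : ℕ, Δ k ≤ 12 * cbar ^ 2 * r ^ 2 / (16 * cbar * r + 3 * t * k) := by
  have hC : 0 < cbar * r := mul_pos hcbar hr
  have homega : ∀ k, 0 ≤ Δ k / (cbar * r) - Real.log (1 + Δ k / (cbar * r)) := by
    intro k
    have hs : 0 ≤ Δ k / (cbar * r) := div_nonneg (hΔ k) hC.le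
    have := Real.log_le_sub_one_of_pos (show (0:ℝ) < 1 + Δ k / (cbar * r) by linarith)
    linarith
  have hmono : ∀ k, Δ (k + 1) ≤ Δ k := by
    intro k
    have := hrec k
    nlinarith [homega k]
  have hbound : ∀ k, Δ k ≤ 3 / 4 * (cbar * r) := by
    intro k
    induction k with
    | zero => linarith
    | succ n ih => linarith [hmono n]
  have hden : ∀ k : ℕ, 0 < 16 * cbar * r + 3 * t * k := by
    intro k
    have : (0:ℝ) ≤ (k:ℝ) := Nat.cast_nonneg k
    nlinarith
  intro k
  induction k with
  | zero =>
    rw [le_div_iff₀ (hden 0)]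
    push_cast
    nlinarith
  | succ k ih =>
    rcases (hΔ (k + 1)).eq_or_lt with h | hD
    · rw [← h]
      positivity
    · have hx : 0 < Δ k := lt_of_lt_of_le hD (hmono k)
      have hs : 0 ≤ Δ k / (cbar * r) := div_nonneg (hΔ k) hC.le
      have hs' : Δ k / (cbar * r) ≤ 3 / 4 := by
        rw [div_le_iff₀ hC]; linarith [hbound k]
      have hω := omega_lower _ hs hs'
      have hA : Δ (k + 1) ≤ Δ k - t * ((Δ k / (cbar * r)) ^ 2 / 4) := by
        have := hrec k
        nlinarith
      have hq : Δ k - t * ((Δ k / (cbar * r)) ^ 2 / 4) =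
          Δ k - t * Δ k ^ 2 / (4 * (cbar * r) ^ 2) := by
        field_simp
      have h4 : (0:ℝ) < 4 * (cbar * r) ^ 2 := by positivity
      have hA2 : t * Δ k ^ 2 / (4 * (cbar * r) ^ 2) ≤ Δ k - Δ (k + 1) := by
        rw [hq] at hA; linarith
      have hA3 : t * Δ k ^ 2 ≤ (Δ k - Δ (k + 1)) * (4 * (cbar * r) ^ 2) :=
        (div_le_iff₀ h4).mp hA2
      have h1 : t * Δ k * Δ (k + 1) ≤ 4 * (cbar * r) ^ 2 * (Δ k - Δ (k + 1)) := by
        nlinarith [mul_le_mul_of_nonneg_left (hmono k) (mul_nonneg ht.le hx.le)]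
      have hB : Δ k * (16 * cbar * r + 3 * t * k) ≤ 12 * cbar ^ 2 * r ^ 2 := by
        rw [← le_div_iff₀ (hden k)]
        exact ih
      rw [le_div_iff₀ (hden (k + 1))]
      push_cast
      have hgoalx : Δ (k + 1) * (16 * cbar * r + 3 * t * ((k:ℝ) + 1)) * Δ k ≤
          12 * cbar ^ 2 * r ^ 2 * Δ k := by
        nlinarith [mul_le_mul_of_nonneg_left hB hD.le, h1, hD.le, hx.le,
          mul_nonneg (hden k).le hD.le]
      exact le_of_mul_le_mul_right (by nlinarith [hgoalx]) hx
end

section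
/- Let g : ℝᵐ → ℝ be convex and differentiable, let t > 0, c̄ > 0, let y* ∈ ℝᵐ and set g* := g(y*). Let y, v ∈ ℝᵐ, θ ∈ (0,1), define r := θ⁻¹·( v − (1 − θ)·y ), ρ := t / ( 2·θ·c̄² ), r₊ := r − ρ·∇g(v), and let y₊ ∈ ℝᵐ satisfy g(y₊) ≤ g(v) − ( t / (4·c̄²) )·‖∇g(v)‖². Then θ⁻²·( g(y₊) − g* ) + ( c̄²/t )·‖r₊ − y*‖² ≤ θ⁻²·(1 − θ)·( g(y) − g* ) + ( c̄²/t )·‖r − y*‖². -/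
open scoped RealInnerProductSpace

lemma stmt14_grad_ineq {m : ℕ} (g : EuclideanSpace ℝ (Fin m) → ℝ)
    (hconv : ConvexOn ℝ Set.univ g) (hdiff : Differentiable ℝ g)
    (v u : EuclideanSpace ℝ (Fin m)) :
    g v + ⟪gradient g v, u - v⟫ ≤ g u := by
  set φ : ℝ → ℝ := g ∘ (AffineMap.lineMap v u) with hφ
  have hev : ∀ s : ℝ, φ s = g (v + s • (u - v)) := by
    intro s
    simp [φ, AffineMap.lineMap_apply_module]
    congr 1
    module
  have hφconv : ConvexOn ℝ Set.univ φ := by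
    simpa using hconv.comp_affineMap (AffineMap.lineMap v u)
  have hline : HasDerivAt (fun s : ℝ => v + s • (u - v)) (u - v) 0 := by
    simpa using ((hasDerivAt_id (0:ℝ)).smul_const (u - v)).const_add v
  have hd : HasDerivAt φ (fderiv ℝ g v (u - v)) 0 := by
    have hg : HasFDerivAt g (fderiv ℝ g v) (v + (0:ℝ) • (u - v)) := by
      simpa using (hdiff v).hasFDerivAt
    have := hg.comp_hasDerivAt 0 hline
    refine HasDerivAt.congr_of_eventuallyEq this (Filter.Eventually.of_forall ?_)
    intro s; rw [hev s]; rfl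
  have hinner : fderiv ℝ g v (u - v) = ⟪gradient g v, u - v⟫ := by
    simp [gradient]
  have hslope := hφconv.le_slope_of_hasDerivAt (Set.mem_univ (0:ℝ))
      (Set.mem_univ (1:ℝ)) one_pos hd
  have h0 : φ 0 = g v := by rw [hev]; simp
  have h1 : φ 1 = g u := by rw [hev]; simp
  rw [show slope φ 0 1 = φ 1 - φ 0 by simp [slope]] at hslope
  rw [h0, h1, hinner] at hslope
  linarith

lemma stmt14_arith (θ t c gp gv gy gs R I N A B : ℝ)
    (hθ0 : 0 < θ) (hθ1 : θ < 1) (ht : 0 < t) (hc : 0 < c)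
    (hy : gp ≤ gv - (t / (4 * c ^ 2)) * N)
    (hθI : θ * I = (1 - θ) * A + θ * B)
    (hA : gv - gy ≤ A) (hB : gv - gs ≤ B) (hN : 0 ≤ N) :
    θ⁻¹ ^ 2 * (gp - gs) +
      (c ^ 2 / t) * (R - 2 * (t / (2 * θ * c ^ 2)) * I + (t / (2 * θ * c ^ 2)) ^ 2 * N) ≤
    θ⁻¹ ^ 2 * (1 - θ) * (gy - gs) + (c ^ 2 / t) * R := by
  have key : gv - gs ≤ (1 - θ) * (gy - gs) + θ * I := by
    nlinarith [mul_le_mul_of_nonneg_left hA (by linarith : (0:ℝ) ≤ 1 - θ),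
      mul_le_mul_of_nonneg_left hB hθ0.le]
  have hc2 : (0:ℝ) < c ^ 2 := by positivity
  have h1 : (c ^ 2 / t) * (2 * (t / (2 * θ * c ^ 2)) * I) = I / θ := by
    field_simp
  have h2 : (c ^ 2 / t) * ((t / (2 * θ * c ^ 2)) ^ 2 * N) = (t / (4 * θ ^ 2 * c ^ 2)) * N := by
    field_simp; ring
  have h3 : θ⁻¹ ^ 2 * ((t / (4 * c ^ 2)) * N) = (t / (4 * θ ^ 2 * c ^ 2)) * N := by
    rw [inv_pow, inv_mul_eq_div, div_mul_eq_mul_div, div_div, div_mul_eq_mul_div]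
    ring_nf
  have key2 : θ⁻¹ ^ 2 * (gv - gs) ≤ θ⁻¹ ^ 2 * (1 - θ) * (gy - gs) + I / θ := by
    have := mul_le_mul_of_nonneg_left key (by positivity : (0:ℝ) ≤ θ⁻¹ ^ 2)
    have hI : θ⁻¹ ^ 2 * (θ * I) = I / θ := by field_simp
    nlinarith [this]
  have hmono := mul_le_mul_of_nonneg_left hy (by positivity : (0:ℝ) ≤ θ⁻¹ ^ 2)
  nlinarith [hmono, key2, h1, h2, h3]

/-- one step of the modified fast gradient scheme (Lemma
`le:accelerating_scheme`). -/
theorem stmt14 {m : ℕ} (g : EuclideanSpace ℝ (Fin m) → ℝ)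
    (hconv : ConvexOn ℝ Set.univ g) (hdiff : Differentiable ℝ g)
    (t cbar : ℝ) (ht : 0 < t) (hcbar : 0 < cbar)
    (ystar y v yplus : EuclideanSpace ℝ (Fin m))
    (θ : ℝ) (hθ : θ ∈ Set.Ioo (0:ℝ) 1)
    (hy : g yplus ≤ g v - (t / (4 * cbar ^ 2)) * ‖gradient g v‖ ^ 2) :
    θ⁻¹ ^ 2 * (g yplus - g ystar) +
      (cbar ^ 2 / t) *
        ‖(θ⁻¹ • (v - (1 - θ) • y) - (t / (2 * θ * cbar ^ 2)) • gradient g v)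
          - ystar‖ ^ 2 ≤
    θ⁻¹ ^ 2 * (1 - θ) * (g y - g ystar) +
      (cbar ^ 2 / t) * ‖θ⁻¹ • (v - (1 - θ) • y) - ystar‖ ^ 2 := by
  obtain ⟨hθ0, hθ1⟩ := hθ
  set G : EuclideanSpace ℝ (Fin m) := gradient g v with hG
  set r : EuclideanSpace ℝ (Fin m) := θ⁻¹ • (v - (1 - θ) • y) with hr
  set ρ : ℝ := t / (2 * θ * cbar ^ 2) with hρ
  -- norm expansion
  have hnorm : ‖(r - ρ • G) - ystar‖ ^ 2
      = ‖r - ystar‖ ^ 2 - 2 * ρ * ⟪G, r - ystar⟫ + ρ ^ 2 * ‖G‖ ^ 2 := by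
    rw [sub_right_comm, norm_sub_sq_real, real_inner_smul_right, norm_smul]
    rw [real_inner_comm]
    simp [mul_pow, sq_abs]
    ring
  -- the key combination identity
  have hθr0 : θ • r = v - (1 - θ) • y := by
    rw [hr, smul_smul, mul_inv_cancel₀ (ne_of_gt hθ0), one_smul]
  have hθr : θ • (r - ystar) = (1 - θ) • (v - y) + θ • (v - ystar) := by
    rw [smul_sub, hθr0]; module
  have hθI : θ * ⟪G, r - ystar⟫ = (1 - θ) * ⟪G, v - y⟫ + θ * ⟪G, v - ystar⟫ := by
    rw [← real_inner_smul_right, hθr, inner_add_right, real_inner_smul_right,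
      real_inner_smul_right]
  -- gradient inequalities
  have hA : g v - g y ≤ ⟪G, v - y⟫ := by
    have h := stmt14_grad_ineq g hconv hdiff v y
    have e : ⟪G, v - y⟫ = -⟪G, y - v⟫ := by
      rw [← inner_neg_right]; congr 1; abel
    linarith [h, e.ge, e.le]
  have hB : g v - g ystar ≤ ⟪G, v - ystar⟫ := by
    have h := stmt14_grad_ineq g hconv hdiff v ystar
    have e : ⟪G, v - ystar⟫ = -⟪G, ystar - v⟫ := by
      rw [← inner_neg_right]; congr 1; abel
    linarith [h, e.ge, e.le]
  rw [hnorm]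
  have := stmt14_arith θ t cbar (g yplus) (g v) (g y) (g ystar)
    (‖r - ystar‖ ^ 2) (⟪G, r - ystar⟫) (‖G‖ ^ 2) (⟪G, v - y⟫) (⟪G, v - ystar⟫)
    hθ0 hθ1 ht hcbar hy hθI hA hB (by positivity)
  linarith [this]
end

section
/- Let (θ_k)_{k≥0} be defined by θ₀ = 1 and θ_{k+1} = (1/2)·θ_k·( √(θ_k² + 4) − θ_k ). Then for every k ≥ 0, 1/(2k + 1) ≤ θ_k ≤ 2/(k + 2). -/
/-- the parameter sequence `θ₀ = 1`,
`θ_{k+1} = θ_k(√(θ_k²+4) − θ_k)/2` satisfies `1/(2k+1) ≤ θ_k ≤ 2/(k+2)`. -/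
theorem stmt15 (θ : ℕ → ℝ) (h0 : θ 0 = 1)
    (hrec : ∀ k, θ (k + 1) = (1 / 2) * θ k * (Real.sqrt (θ k ^ 2 + 4) - θ k)) :
    ∀ k : ℕ, 1 / (2 * (k : ℝ) + 1) ≤ θ k ∧ θ k ≤ 2 / ((k : ℝ) + 2) := by
  intro k
  induction k with
  | zero => rw [h0]; norm_num
  | succ k ih =>
    obtain ⟨hl, hu⟩ := ih
    set t := θ k with htdef
    have hn : (0:ℝ) ≤ (k:ℝ) := Nat.cast_nonneg k
    have ht : 0 < t := lt_of_lt_of_le (by positivity) hl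
    have hs4 : (0:ℝ) ≤ t ^ 2 + 4 := by positivity
    have hs : Real.sqrt (t ^ 2 + 4) ^ 2 = t ^ 2 + 4 := Real.sq_sqrt hs4
    have hsgt : t < Real.sqrt (t ^ 2 + 4) := by
      nlinarith [Real.sqrt_nonneg (t ^ 2 + 4)]
    set x := θ (k + 1) with hxdef
    have hxeq : x = (1 / 2) * t * (Real.sqrt (t ^ 2 + 4) - t) := hrec k
    have hx0 : 0 < x := by rw [hxeq]; nlinarith
    have hkey : x ^ 2 = t ^ 2 * (1 - x) := by rw [hxeq]; nlinarith [hs]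
    have hx1 : x < 1 := by nlinarith [sq_nonneg x, sq_nonneg t]
    have hlt : 1 ≤ t * (2 * (k:ℝ) + 1) := (div_le_iff₀ (by positivity)).mp hl
    have hut : t * ((k:ℝ) + 2) ≤ 2 := (le_div_iff₀ (by positivity)).mp hu
    have h1x : (0:ℝ) ≤ 1 - x := by linarith
    constructor
    · push_cast
      rw [div_le_iff₀ (by positivity)]
      nlinarith [mul_nonneg h1x (sq_nonneg (t * (2 * (k:ℝ) + 1) - 1)),
        mul_pos hx0 hx0, sq_nonneg (x * (2 * (k:ℝ) + 3) - 1), mul_pos hx0 ht]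
    · push_cast
      rw [le_div_iff₀ (by positivity)]
      have h2 : x ^ 2 * ((k:ℝ) + 2) ^ 2 ≤ 4 * (1 - x) := by
        have ht2 : (t * ((k:ℝ) + 2)) ^ 2 ≤ 4 := by
          nlinarith [mul_nonneg ht.le (by linarith : (0:ℝ) ≤ (k:ℝ) + 2)]
        nlinarith [mul_le_mul_of_nonneg_left ht2 h1x]
      nlinarith [mul_nonneg (sq_nonneg (x * ((k:ℝ) + 3) - 2)) (sq_nonneg ((k:ℝ) + 2)),
        sq_nonneg (x * ((k:ℝ) + 3) - 2), mul_pos hx0 (by positivity : (0:ℝ) < ((k:ℝ)+2)^2),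
        mul_nonneg (mul_pos hx0 (by positivity : (0:ℝ) < ((k:ℝ)+2)^2)).le hn, hx0]
end

section
/- Let g : ℝᵐ → ℝ be convex and differentiable, let t > 0, c̄ > 0, let y* ∈ ℝᵐ and set g* := g(y*). Let (θ_k)_{k≥0} satisfy θ₀ = 1 and θ_{k+1} = (1/2)·θ_k·( √(θ_k² + 4) − θ_k ). Let (y^k)_{k≥0} and (v^k)_{k≥0} be sequences in ℝᵐ with v⁰ = y⁰ such that, for every k ≥ 0: r^k := θ_k⁻¹·( v^k − (1 − θ_k)·y^k ), ρ_k := t / ( 2·c̄²·θ_k ), v^{k+1} = (1 − θ_{k+1})·y^{k+1} + θ_{k+1}·( r^k − ρ_k·∇g(v^k) ), and g(y^{k+1}) ≤ g(v^k) − ( t / (4·c̄²) )·‖∇g(v^k)‖². Then for every k ≥ 1, g(y^k) − g* ≤ ( 4·c̄² / ( t·(k + 1)² ) )·‖y⁰ − y*‖². -/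
open InnerProductSpace

private lemma theta_aux (a b n : ℝ) (hn : 0 ≤ n) (h1 : 0 < a) (h2 : 0 < b) (h21 : b < 1)
    (hsq : b^2 = (1 - b) * a^2) (hb : a ≤ 2/(n+2)) : b ≤ 2/(n+3) := by
  rw [le_div_iff₀ (by linarith)] at hb ⊢
  nlinarith [sq_nonneg (b*(n+3) - 2), sq_nonneg (a*(n+2) - 2), mul_pos h1 h2, sq_nonneg (a - b)]

lemma grad_ineq' {m : ℕ} {g : EuclideanSpace ℝ (Fin m) → ℝ}
    (hconv : ConvexOn ℝ Set.univ g) (hdiff : Differentiable ℝ g)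
    (x z : EuclideanSpace ℝ (Fin m)) :
    g x + inner ℝ (gradient g x) (z - x) ≤ g z := by
  have hfd : HasFDerivAt g ((toDual ℝ (EuclideanSpace ℝ (Fin m))) (gradient g x)) x :=
    (hdiff x).hasGradientAt.hasFDerivAt
  have hline : HasDerivAt (fun s : ℝ => x + s • (z - x)) (z - x) 0 := by
    simpa using ((hasDerivAt_id (0:ℝ)).smul_const (z - x)).const_add x
  have hx0 : x + (0:ℝ) • (z - x) = x := by simp
  have hφ : HasDerivAt (fun s : ℝ => g (x + s • (z - x)))
      (inner ℝ (gradient g x) (z - x) : ℝ) 0 := by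
    have h := (hx0 ▸ hfd).comp_hasDerivAt 0 hline
    simp only [toDual_apply_apply, hx0] at h
    exact h
  have hφconv : ConvexOn ℝ Set.univ (fun s : ℝ => g (x + s • (z - x))) := by
    have h := hconv.comp_affineMap (AffineMap.lineMap x z)
    have : (fun s : ℝ => g (x + s • (z - x))) = (g ∘ (AffineMap.lineMap x z)) := by
      funext s
      simp [AffineMap.lineMap_apply, add_comm]
    rw [this]
    simpa using h
  have hs := hφconv.le_slope_of_hasDerivAt (Set.mem_univ 0) (Set.mem_univ 1) zero_lt_one hφ
  rw [slope_def_field] at hs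
  have h1 : x + (1:ℝ) • (z - x) = z := by module
  have h0 : x + (0:ℝ) • (z - x) = x := by module
  rw [h1, h0, show (1:ℝ) - 0 = 1 by norm_num, div_one] at hs
  linarith

/-- convergence rate of the fast gradient decomposition algorithm
(Theorem `th:fast_grad_convergence`): `g(y^k) − g* ≤ 4c̄²‖y⁰ − y*‖²/(t(k+1)²)`. -/
theorem stmt18 {m : ℕ} (g : EuclideanSpace ℝ (Fin m) → ℝ)
    (hconv : ConvexOn ℝ Set.univ g) (hdiff : Differentiable ℝ g)
    (t cbar : ℝ) (ht : 0 < t) (hcbar : 0 < cbar)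
    (ystar : EuclideanSpace ℝ (Fin m))
    (θ : ℕ → ℝ) (hθ0 : θ 0 = 1)
    (hθ : ∀ k, θ (k + 1) = (1 / 2) * θ k * (Real.sqrt (θ k ^ 2 + 4) - θ k))
    (y v : ℕ → EuclideanSpace ℝ (Fin m)) (hv0 : v 0 = y 0)
    (hv : ∀ k, v (k + 1) = (1 - θ (k + 1)) • y (k + 1) +
      θ (k + 1) • ((θ k)⁻¹ • (v k - (1 - θ k) • y k) -
        (t / (2 * cbar ^ 2 * θ k)) • gradient g (v k)))
    (hdec : ∀ k, g (y (k + 1)) ≤ g (v k) -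
      (t / (4 * cbar ^ 2)) * ‖gradient g (v k)‖ ^ 2) :
    ∀ k : ℕ, 1 ≤ k →
      g (y k) - g ystar ≤
        (4 * cbar ^ 2 / (t * ((k : ℝ) + 1) ^ 2)) * ‖y 0 - ystar‖ ^ 2 := by
  -- basic facts about θ
  have hstep : ∀ k, θ (k+1)^2 = (1 - θ (k+1)) * θ k ^ 2 ∧ (0 < θ k → 0 < θ (k+1)) := by
    intro k
    have h4 : (0:ℝ) ≤ θ k^2 + 4 := by positivity
    have hs2 : Real.sqrt (θ k^2+4) ^ 2 = θ k^2 + 4 := Real.sq_sqrt h4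
    have hsn : 0 ≤ Real.sqrt (θ k^2+4) := Real.sqrt_nonneg _
    constructor
    · rw [hθ k]; linear_combination (θ k^2/4) * hs2
    · intro h1
      rw [hθ k]
      have : θ k < Real.sqrt (θ k^2+4) := by nlinarith
      nlinarith
  have hpos : ∀ k, 0 < θ k := by
    intro k
    induction k with
    | zero => rw [hθ0]; norm_num
    | succ k ih => exact (hstep k).2 ih
  have hsq : ∀ k, θ (k+1)^2 = (1 - θ (k+1)) * θ k ^ 2 := fun k => (hstep k).1
  have hlt1 : ∀ k, θ (k+1) < 1 := by
    intro k
    nlinarith [hsq k, hpos k, hpos (k+1)]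
  have hle1 : ∀ k, θ k ≤ 1 := by
    intro k
    cases k with
    | zero => rw [hθ0]
    | succ k => exact (hlt1 k).le
  have hbound : ∀ k, θ k ≤ 2/((k:ℝ)+2) := by
    intro k
    induction k with
    | zero => rw [hθ0]; norm_num
    | succ k ih =>
      have h := theta_aux (θ k) (θ (k+1)) (k:ℝ) (Nat.cast_nonneg k) (hpos k) (hpos (k+1))
        (hlt1 k) (hsq k) ih
      push_cast
      have e : (k:ℝ) + 1 + 2 = (k:ℝ) + 3 := by ring
      rw [e]
      exact h
  -- the auxiliary sequence r
  set r : ℕ → EuclideanSpace ℝ (Fin m) :=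
    fun n => (θ n)⁻¹ • (v n - (1 - θ n) • y n) with hrdef
  have hr0 : r 0 = y 0 := by
    simp only [hrdef, hθ0, hv0]
    simp
  have hr : ∀ k, r (k+1) = r k - (t / (2 * cbar ^ 2 * θ k)) • gradient g (v k) := by
    intro k
    simp only [hrdef]
    rw [hv k, add_sub_cancel_left, smul_smul, inv_mul_cancel₀ (hpos (k+1)).ne', one_smul]
  -- per-step inequality
  have key : ∀ k, g (y (k+1)) - g ystar ≤ (1 - θ k) * (g (y k) - g ystar) +
      cbar^2/t * θ k^2 * (‖r k - ystar‖^2 - ‖r (k+1) - ystar‖^2) := by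
    intro k
    have hθk := hpos k
    have hθk1 := hle1 k
    set G := gradient g (v k) with hG
    set ρ := t / (2*cbar^2*θ k) with hρ
    have hvk : v k = (1 - θ k) • y k + θ k • r k := by
      simp only [hrdef]
      rw [smul_smul, mul_inv_cancel₀ hθk.ne', one_smul]
      module
    have h1 := grad_ineq' hconv hdiff (v k) ystar
    have h2 := grad_ineq' hconv hdiff (v k) (y k)
    have hvec : (1 - θ k) • (y k - v k) + θ k • (ystar - v k)
        = -(θ k • (r k - ystar)) := by
      rw [hvk]; module
    have hcomb : (1 - θ k) * (inner ℝ G (y k - v k) : ℝ) + θ k * (inner ℝ G (ystar - v k) : ℝ)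
        = -(θ k * (inner ℝ G (r k - ystar) : ℝ)) := by
      rw [← real_inner_smul_right, ← real_inner_smul_right, ← inner_add_right, hvec,
        inner_neg_right, real_inner_smul_right]
    have hr1 : r (k+1) - ystar = (r k - ystar) - ρ • G := by
      rw [hr k]; module
    have hnorm : ‖r (k+1) - ystar‖^2 = ‖r k - ystar‖^2
        - 2*ρ*(inner ℝ G (r k - ystar) : ℝ) + ρ^2*‖G‖^2 := by
      rw [hr1, @norm_sub_sq_real, real_inner_smul_right, real_inner_comm, norm_smul]
      simp [mul_pow, sq_abs]
      ring
    have e1 : cbar^2/t * θ k^2 * (‖r k - ystar‖^2 - ‖r (k+1) - ystar‖^2)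
        = θ k * (inner ℝ G (r k - ystar) : ℝ) - t/(4*cbar^2)*‖G‖^2 := by
      rw [hnorm, hρ]
      field_simp
      ring
    have hdk := hdec k
    have h1' := mul_le_mul_of_nonneg_left h1 hθk.le
    have h2' := mul_le_mul_of_nonneg_left h2 (by linarith : (0:ℝ) ≤ 1 - θ k)
    linarith [h1', h2', hdk, hcomb, e1]
  -- main induction
  have C : ∀ k, g (y (k+1)) - g ystar ≤
      cbar^2/t * θ k^2 * (‖y 0 - ystar‖^2 - ‖r (k+1) - ystar‖^2) := by
    intro k
    induction k with
    | zero =>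
      have h := key 0
      rw [hθ0, hr0] at h
      rw [hθ0]
      linarith
    | succ k ih =>
      have hk1 := key (k+1)
      have h := mul_le_mul_of_nonneg_left ih (by linarith [hlt1 k] : (0:ℝ) ≤ 1 - θ (k+1))
      have h' : (1 - θ (k+1)) * (cbar^2/t * θ k^2 *
            (‖y 0 - ystar‖^2 - ‖r (k+1) - ystar‖^2))
          = cbar^2/t * θ (k+1)^2 * (‖y 0 - ystar‖^2 - ‖r (k+1) - ystar‖^2) := by
        rw [hsq k]; ring
      linarith [hk1, h, h']
  -- conclude
  intro k hk
  obtain ⟨j, rfl⟩ : ∃ j, k = j + 1 := ⟨k - 1, by omega⟩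
  have hb := hbound j
  have hθj := hpos j
  have hsq' : θ j^2 ≤ (2/((j:ℝ)+2))^2 := pow_le_pow_left₀ hθj.le hb 2
  have hD : (0:ℝ) ≤ ‖y 0 - ystar‖^2 := sq_nonneg _
  have hjj : (0:ℝ) < (j:ℝ) + 2 := by positivity
  have step1 : g (y (j+1)) - g ystar ≤ cbar^2/t * θ j^2 * ‖y 0 - ystar‖^2 := by
    have h0 := C j
    have hnn : (0:ℝ) ≤ cbar^2/t * θ j^2 * ‖r (j+1) - ystar‖^2 := by positivity
    nlinarith [h0, hnn]
  have step2 : cbar^2/t * θ j^2 * ‖y 0 - ystar‖^2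
      ≤ cbar^2/t * (2/((j:ℝ)+2))^2 * ‖y 0 - ystar‖^2 := by
    apply mul_le_mul_of_nonneg_right _ hD
    apply mul_le_mul_of_nonneg_left hsq' (by positivity)
  have hcast : (((j:ℕ)+1 : ℕ) : ℝ) + 1 = (j:ℝ) + 2 := by push_cast; ring
  rw [hcast]
  have step3 : cbar^2/t * (2/((j:ℝ)+2))^2 = 4 * cbar ^ 2 / (t * ((j:ℝ) + 2) ^ 2) := by
    rw [div_pow]
    field_simp
    ring
  have step2' : cbar^2/t * (2/((j:ℝ)+2))^2 * ‖y 0 - ystar‖^2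
      ≤ 4 * cbar ^ 2 / (t * ((j:ℝ) + 2) ^ 2) * ‖y 0 - ystar‖ ^ 2 := by
    rw [step3]
  linarith [step1, step2, step2']
end
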